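/- Consider the HSA dynamo system with β = 0, κ ≠ 0, and α = -κ(κ-1) ≠ 0. Let T(x,y) = √(-κ²(x²-1) + (y-1)² + κ(x² + 2y - 2)). Then F₃(x,y,z) = κ·log(2(κ + y - 1 + T)/(-x)) - T is a first integral of the vector field X = x(y-1)∂ₓ + (α(1-x²) - κy)∂_y + (x - λz)∂_z on any open subset of {x < 0} where the expression under the square root is positive and κ + y - 1 + T > 0. -/

import Mathlib

/-- For the HSA dynamo with β = 0, κ ≠ 0, α = -κ(κ-1) ≠ 0, with
T = √(-κ²(x²-1) + (y-1)² + κ(x²+2y-2)), the function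
F₃ = κ log(2(κ+y-1+T)/(-x)) - T satisfies X F₃ = 0 on {x < 0}, where the
radicand is positive and κ + y - 1 + T > 0. -/
theorem stmt_2 (α κ lam : ℝ) (hκ : κ ≠ 0) (hα : α = -κ * (κ - 1)) (hα0 : α ≠ 0)
    (x y z : ℝ) (hx : x < 0)
    (hS : 0 < -κ ^ 2 * (x ^ 2 - 1) + (y - 1) ^ 2 + κ * (x ^ 2 + 2 * y - 2))
    (hpos : 0 < κ + y - 1 +
      Real.sqrt (-κ ^ 2 * (x ^ 2 - 1) + (y - 1) ^ 2 + κ * (x ^ 2 + 2 * y - 2))) :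
    (x * (y - 1)) *
        deriv (fun x' : ℝ =>
          κ * Real.log (2 * (κ + y - 1 +
              Real.sqrt (-κ ^ 2 * (x' ^ 2 - 1) + (y - 1) ^ 2 + κ * (x' ^ 2 + 2 * y - 2)))
            / (-x'))
          - Real.sqrt (-κ ^ 2 * (x' ^ 2 - 1) + (y - 1) ^ 2 + κ * (x' ^ 2 + 2 * y - 2))) x
      + (α * (1 - x ^ 2) - κ * y) *
        deriv (fun y' : ℝ =>
          κ * Real.log (2 * (κ + y' - 1 +
              Real.sqrt (-κ ^ 2 * (x ^ 2 - 1) + (y' - 1) ^ 2 + κ * (x ^ 2 + 2 * y' - 2)))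
            / (-x))
          - Real.sqrt (-κ ^ 2 * (x ^ 2 - 1) + (y' - 1) ^ 2 + κ * (x ^ 2 + 2 * y' - 2))) y
      + (x - lam * z) *
        deriv (fun _z' : ℝ =>
          κ * Real.log (2 * (κ + y - 1 +
              Real.sqrt (-κ ^ 2 * (x ^ 2 - 1) + (y - 1) ^ 2 + κ * (x ^ 2 + 2 * y - 2)))
            / (-x))
          - Real.sqrt (-κ ^ 2 * (x ^ 2 - 1) + (y - 1) ^ 2 + κ * (x ^ 2 + 2 * y - 2))) z
      = 0 := by
  set S : ℝ := -κ ^ 2 * (x ^ 2 - 1) + (y - 1) ^ 2 + κ * (x ^ 2 + 2 * y - 2) with hSdef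
  set T : ℝ := Real.sqrt S with hTdef
  have hT0 : 0 < T := Real.sqrt_pos.mpr hS
  have hT2 : T ^ 2 = S := Real.sq_sqrt hS.le
  have hxne : x ≠ 0 := ne_of_lt hx
  have hA : κ + y - 1 + T > 0 := hpos
  -- x-derivative of the radicand
  have hS1 : HasDerivAt (fun x' : ℝ =>
      -κ ^ 2 * (x' ^ 2 - 1) + (y - 1) ^ 2 + κ * (x' ^ 2 + 2 * y - 2))
      (-κ ^ 2 * (2 * x) + κ * (2 * x)) x := by
    have hx2 : HasDerivAt (fun x' : ℝ => x' ^ 2) (2 * x) x := by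
      simpa using hasDerivAt_pow 2 x
    have h1 := ((hx2.sub_const 1).const_mul (-κ ^ 2)).add_const ((y - 1) ^ 2)
    have h2 := ((hx2.add_const (2 * y - 2)).const_mul κ)
    have := h1.add h2
    exact (this.congr_of_eventuallyEq (Filter.Eventually.of_forall fun _ => by simp only [Pi.add_apply]; ring)).congr_deriv (by ring)
  have hTx : HasDerivAt (fun x' : ℝ => Real.sqrt
      (-κ ^ 2 * (x' ^ 2 - 1) + (y - 1) ^ 2 + κ * (x' ^ 2 + 2 * y - 2)))
      ((-κ ^ 2 * (2 * x) + κ * (2 * x)) / (2 * T)) x := by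
    exact hS1.sqrt (ne_of_gt hS)
  -- x-derivative of the log argument
  have hUx : HasDerivAt (fun x' : ℝ => 2 * (κ + y - 1 +
      Real.sqrt (-κ ^ 2 * (x' ^ 2 - 1) + (y - 1) ^ 2 + κ * (x' ^ 2 + 2 * y - 2))) / (-x'))
      ((2 * ((-κ ^ 2 * (2 * x) + κ * (2 * x)) / (2 * T)) * (-x)
        - 2 * (κ + y - 1 + T) * (-1)) / (-x) ^ 2) x := by
    have hnum : HasDerivAt (fun x' : ℝ => 2 * (κ + y - 1 +
        Real.sqrt (-κ ^ 2 * (x' ^ 2 - 1) + (y - 1) ^ 2 + κ * (x' ^ 2 + 2 * y - 2))))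
        (2 * ((-κ ^ 2 * (2 * x) + κ * (2 * x)) / (2 * T))) x :=
      (hTx.const_add (κ + y - 1)).const_mul 2
    have hden : HasDerivAt (fun x' : ℝ => -x') (-1 : ℝ) x := (hasDerivAt_id x).neg
    exact hnum.div hden (by simpa using hxne)
  have hUxpos : 2 * (κ + y - 1 + T) / (-x) > 0 :=
    div_pos (by linarith) (by linarith)
  have hFx : HasDerivAt (fun x' : ℝ =>
      κ * Real.log (2 * (κ + y - 1 +
        Real.sqrt (-κ ^ 2 * (x' ^ 2 - 1) + (y - 1) ^ 2 + κ * (x' ^ 2 + 2 * y - 2))) / (-x'))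
      - Real.sqrt (-κ ^ 2 * (x' ^ 2 - 1) + (y - 1) ^ 2 + κ * (x' ^ 2 + 2 * y - 2)))
      (κ * (((2 * ((-κ ^ 2 * (2 * x) + κ * (2 * x)) / (2 * T)) * (-x)
        - 2 * (κ + y - 1 + T) * (-1)) / (-x) ^ 2) / (2 * (κ + y - 1 + T) / (-x)))
       - (-κ ^ 2 * (2 * x) + κ * (2 * x)) / (2 * T)) x :=
    ((hUx.log (ne_of_gt hUxpos)).const_mul κ).sub hTx
  -- y-derivative
  have hS2 : HasDerivAt (fun y' : ℝ =>
      -κ ^ 2 * (x ^ 2 - 1) + (y' - 1) ^ 2 + κ * (x ^ 2 + 2 * y' - 2))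
      (2 * (y - 1) + κ * 2) y := by
    have hy1 : HasDerivAt (fun y' : ℝ => (y' - 1) ^ 2) (2 * (y - 1)) y := by
      have := ((hasDerivAt_id y).sub_const 1).pow 2
      simp only [Pi.pow_def] at this
      simpa using this
    have hy2 : HasDerivAt (fun y' : ℝ => κ * (x ^ 2 + 2 * y' - 2)) (κ * 2) y := by
      have h := (((hasDerivAt_id y).const_mul 2).const_add (x ^ 2)).sub_const 2
      have := h.const_mul κ
      exact (this.congr_of_eventuallyEq (Filter.Eventually.of_forall fun _ => by simp only [id_eq])).congr_deriv (by ring)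
    have := (hy1.const_add (-κ ^ 2 * (x ^ 2 - 1))).add hy2
    exact (this.congr_of_eventuallyEq (Filter.Eventually.of_forall fun _ => by simp only [Pi.add_apply])).congr_deriv (by ring)
  have hTy : HasDerivAt (fun y' : ℝ => Real.sqrt
      (-κ ^ 2 * (x ^ 2 - 1) + (y' - 1) ^ 2 + κ * (x ^ 2 + 2 * y' - 2)))
      ((2 * (y - 1) + κ * 2) / (2 * T)) y := hS2.sqrt (ne_of_gt hS)
  have hUy : HasDerivAt (fun y' : ℝ => 2 * (κ + y' - 1 +
      Real.sqrt (-κ ^ 2 * (x ^ 2 - 1) + (y' - 1) ^ 2 + κ * (x ^ 2 + 2 * y' - 2))) / (-x))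
      (2 * (1 + (2 * (y - 1) + κ * 2) / (2 * T)) / (-x)) y := by
    have hinner : HasDerivAt (fun y' : ℝ => κ + y' - 1 +
        Real.sqrt (-κ ^ 2 * (x ^ 2 - 1) + (y' - 1) ^ 2 + κ * (x ^ 2 + 2 * y' - 2)))
        (1 + (2 * (y - 1) + κ * 2) / (2 * T)) y := by
      have h1 : HasDerivAt (fun y' : ℝ => κ + y' - 1) (1 : ℝ) y := by
        simpa using ((hasDerivAt_id y).const_add κ).sub_const 1
      exact h1.add hTy
    have := (hinner.const_mul 2).div_const (-x)
    simpa [div_eq_mul_inv] using this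
  have hFy : HasDerivAt (fun y' : ℝ =>
      κ * Real.log (2 * (κ + y' - 1 +
        Real.sqrt (-κ ^ 2 * (x ^ 2 - 1) + (y' - 1) ^ 2 + κ * (x ^ 2 + 2 * y' - 2))) / (-x))
      - Real.sqrt (-κ ^ 2 * (x ^ 2 - 1) + (y' - 1) ^ 2 + κ * (x ^ 2 + 2 * y' - 2)))
      (κ * ((2 * (1 + (2 * (y - 1) + κ * 2) / (2 * T)) / (-x)) / (2 * (κ + y - 1 + T) / (-x)))
       - (2 * (y - 1) + κ * 2) / (2 * T)) y :=
    ((hUy.log (ne_of_gt hUxpos)).const_mul κ).sub hTy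
  have hTne : T ≠ 0 := ne_of_gt hT0
  have hAne : κ + y - 1 + T ≠ 0 := ne_of_gt hA
  have hxn : -x ≠ 0 := by simpa using hxne
  have hDx : κ * (((2 * ((-κ ^ 2 * (2 * x) + κ * (2 * x)) / (2 * T)) * (-x)
        - 2 * (κ + y - 1 + T) * (-1)) / (-x) ^ 2) / (2 * (κ + y - 1 + T) / (-x)))
       - (-κ ^ 2 * (2 * x) + κ * (2 * x)) / (2 * T)
      = κ * x * α / (T * (κ + y - 1 + T)) - κ / x - x * α / T := by
    rw [hα]; field_simp; ring
  have hDy : κ * ((2 * (1 + (2 * (y - 1) + κ * 2) / (2 * T)) / (-x))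
        / (2 * (κ + y - 1 + T) / (-x))) - (2 * (y - 1) + κ * 2) / (2 * T)
      = (1 - y) / T := by
    field_simp; ring
  rw [hFx.deriv, hFy.deriv, deriv_const, hDx, hDy, mul_zero, add_zero]
  have key : x ^ 2 * α + (κ + y - 1) ^ 2 - T ^ 2 = 0 := by
    rw [hT2, hSdef, hα]; ring
  have main : x * (y - 1) * (κ * x * α / (T * (κ + y - 1 + T)) - κ / x - x * α / T)
      + (α * (1 - x ^ 2) - κ * y) * ((1 - y) / T)
      = κ * (y - 1) * (x ^ 2 * α + (κ + y - 1) ^ 2 - T ^ 2) / (T * (κ + y - 1 + T)) := by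
    rw [hα]; field_simp; ring
  rw [main, key]
  simp
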